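/- Let L be an n×n graph Laplacian matrix and suppose L = G Gᵀ, where G is an n×n lower triangular matrix such that G_{jj} > 0 for j ∈ [k] and all columns of G with index l > k are zero. Then every strictly lower off-diagonal entry in the first k columns of G is nonpositive: G_{ij} ≤ 0 for all j ∈ [k] and all i > j. -/

import Mathlib

open Matrix BigOperators

/-- If a graph Laplacian matrix factors as `L = G Gᵀ` with `G` lower triangular, positive
diagonal entries in the first `k` columns, and zero columns beyond the `k`-th, then all
strictly lower off-diagonal entries in the first `k` columns of `G` are nonpositive. -/
theorem cholesky_factor_of_laplacian_offdiag_nonpos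
    {n : ℕ} (L G : Matrix (Fin n) (Fin n) ℝ)
    (hsym : L.IsSymm)
    (hoff : ∀ u v : Fin n, u ≠ v → L u v ≤ 0)
    (hdiag : ∀ v : Fin n, L v v = -∑ u ∈ Finset.univ.erase v, L u v)
    (hLG : L = G * Gᵀ)
    (hlower : ∀ i j : Fin n, i < j → G i j = 0)
    (k : ℕ)
    (hdiagpos : ∀ j : Fin n, (j : ℕ) < k → 0 < G j j)
    (hzerocols : ∀ i l : Fin n, k ≤ (l : ℕ) → G i l = 0) :
    ∀ i j : Fin n, (j : ℕ) < k → j < i → G i j ≤ 0 := by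
  suffices H : ∀ m : ℕ, ∀ j : Fin n, (j : ℕ) = m → (j : ℕ) < k →
      ∀ i : Fin n, j < i → G i j ≤ 0 by
    intro i j hjk hji; exact H j j rfl hjk i hji
  intro m
  induction m using Nat.strong_induction_on with
  | _ m ih =>
    intro j hjm hjk i hji
    have key : L i j = ∑ x, G i x * G j x := by
      rw [hLG]; simp [Matrix.mul_apply, Matrix.transpose_apply]
    have hsplit : ∑ x, G i x * G j x
        = G i j * G j j + ∑ x ∈ Finset.univ.erase j, G i x * G j x :=
      (Finset.add_sum_erase _ _ (Finset.mem_univ j)).symm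
    have hnn : 0 ≤ ∑ x ∈ Finset.univ.erase j, G i x * G j x := by
      apply Finset.sum_nonneg
      intro x hx
      rcases lt_trichotomy x j with h | h | h
      · have hxm : (x : ℕ) < m := by
          have := (Fin.lt_iff_val_lt_val.mp h); omega
        have hxk : (x : ℕ) < k := by
          have := (Fin.lt_iff_val_lt_val.mp h); omega
        have h1 : G i x ≤ 0 := ih (x : ℕ) hxm x rfl hxk i (h.trans hji)
        have h2 : G j x ≤ 0 := ih (x : ℕ) hxm x rfl hxk j h
        nlinarith
      · exact absurd h (Finset.ne_of_mem_erase hx)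
      · simp [hlower j x h]
    have hLij : L i j ≤ 0 := hoff i j (ne_of_gt hji)
    have hmul : G i j * G j j ≤ 0 := by
      rw [key, hsplit] at hLij; linarith
    have hpos := hdiagpos j hjk
    nlinarith
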